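/- Let n ≥ 3 be odd and let η = e^{2πi/n}. Then −1 is a simple root of the polynomial g with (X−1)(X−η^{i})(X−η^{−i})·g = ((1−η^{i})(1−η^{−i})/n)·X(X+1)(X^{n}−1) for every 1 ≤ i < n/2, and −1 is a simple root of the polynomial D with (X−η^{a})(X−η^{−a})(X−η^{b})(X−η^{−b})·D = ((η^{a}+η^{−a}−η^{b}−η^{−b})/n)·X(X²−1)(X^{n}−1) for all 1 ≤ a < b < n−a; while −1 is not a root of the constant polynomial 1 nor of X^{n}. Hence among the generic degrees of unipotent characters of I₂(n,q) (n odd), exactly Deg(φ_{1,0}) = 1 and Deg(φ_{1,n}) = q^{n} are not divisible by X+1, so the principal Φ₂-block consists of the two unipotent characters φ_{1,0} and φ_{1,n}. -/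

import Mathlib

open Polynomial

private lemma rm_aux (P g R : ℂ[X]) (hP : P.eval (-1) ≠ 0) (hR : R.eval (-1) ≠ 0)
    (h : P * g = (X + 1) * R) : g.rootMultiplicity (-1) = 1 := by
  have hXp : (X + 1 : ℂ[X]) = X - C (-1) := by simp [sub_neg_eq_add]
  have hP0 : P ≠ 0 := fun h0 => hP (by simp [h0])
  have hR0 : R ≠ 0 := fun h0 => hR (by simp [h0])
  have hX0 : (X + 1 : ℂ[X]) ≠ 0 := by rw [hXp]; exact X_sub_C_ne_zero _
  have hg0 : g ≠ 0 := by
    rintro rfl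
    exact (mul_ne_zero hX0 hR0) (by simpa using h.symm)
  have h1 := rootMultiplicity_mul (p := P) (q := g) (x := (-1 : ℂ)) (mul_ne_zero hP0 hg0)
  have h2 := rootMultiplicity_mul (p := (X + 1 : ℂ[X])) (q := R) (x := (-1 : ℂ))
    (mul_ne_zero hX0 hR0)
  rw [h, h2, rootMultiplicity_eq_zero (p := R) (by simpa [IsRoot] using hR)] at h1
  rw [rootMultiplicity_eq_zero (p := P) (by simpa [IsRoot] using hP)] at h1
  rw [hXp, rootMultiplicity_X_sub_C_self] at h1
  omega

/-- For `n ≥ 3` odd and `η = e^{2πi/n}`: `−1` is a simple root of the generic degree `g` of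
each `φ_{2,i}` (`1 ≤ i < n/2`) and of the generic degree `D` of each `I₂(n)[a,b]`
(`1 ≤ a < b < n−a`), while `−1` is not a root of the constant polynomial `1` nor of `Xⁿ`.
Hence among the generic degrees of unipotent characters of `I₂(n,q)` exactly
`Deg(φ_{1,0}) = 1` and `Deg(φ_{1,n}) = qⁿ` are not divisible by `X + 1`, so the principal
`Φ₂`-block consists of the two unipotent characters `φ_{1,0}` and `φ_{1,n}`. -/
theorem principal_Phi2_block_odd (n : ℕ) (hn : 3 ≤ n) (hodd : Odd n) (η : ℂ)
    (hη : η = Complex.exp (2 * Real.pi * Complex.I / (n : ℂ))) :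
    (∀ i : ℕ, 1 ≤ i → 2 * i < n → ∀ g : ℂ[X],
      (X - 1) * (X - C (η ^ i)) * (X - C ((η ^ i)⁻¹)) * g =
        C ((1 - η ^ i) * (1 - (η ^ i)⁻¹) / (n : ℂ)) * (X * (X + 1) * (X ^ n - 1)) →
      g.rootMultiplicity (-1) = 1) ∧
    (∀ a b : ℕ, 1 ≤ a → a < b → a + b < n → ∀ D : ℂ[X],
      (X - C (η ^ a)) * (X - C ((η ^ a)⁻¹)) * (X - C (η ^ b)) * (X - C ((η ^ b)⁻¹)) * D =
        C ((η ^ a + (η ^ a)⁻¹ - η ^ b - (η ^ b)⁻¹) / (n : ℂ)) *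
          (X * (X ^ 2 - 1) * (X ^ n - 1)) →
      D.rootMultiplicity (-1) = 1) ∧
    (1 : ℂ[X]).eval (-1) ≠ 0 ∧ ((X : ℂ[X]) ^ n).eval (-1) ≠ 0 := by
  have hn0 : n ≠ 0 := by omega
  have hprim : IsPrimitiveRoot η n := hη ▸ Complex.isPrimitiveRoot_exp n hn0
  have hηne : η ≠ 0 := hprim.ne_zero hn0
  have hnC : (n : ℂ) ≠ 0 := Nat.cast_ne_zero.mpr hn0
  have hcop : n.Coprime 2 := Nat.coprime_two_right.mpr hodd
  -- η^k ≠ 1 for 0 < k < n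
  have hne1 : ∀ k : ℕ, 0 < k → k < n → η ^ k ≠ 1 := fun k h1 h2 =>
    hprim.pow_ne_one_of_pos_of_lt h1.ne' h2
  -- η^k ≠ -1 for 0 < k < n
  have hneM1 : ∀ k : ℕ, 0 < k → k < n → η ^ k ≠ -1 := by
    intro k h1 h2 h
    have h2k : η ^ (2 * k) = 1 := by rw [mul_comm, pow_mul, h]; norm_num
    have hdvd : n ∣ 2 * k := hprim.dvd_of_pow_eq_one _ h2k
    have : n ∣ k := hcop.dvd_of_dvd_mul_left hdvd
    exact absurd (Nat.le_of_dvd h1 this) (by omega)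
  have hinvM1 : ∀ k : ℕ, 0 < k → k < n → (η ^ k)⁻¹ ≠ -1 := by
    intro k h1 h2 h
    have := congrArg Inv.inv h
    simp only [inv_inv] at this
    exact hneM1 k h1 h2 (this.trans (by norm_num))
  refine ⟨?_, ?_, by simp, ?_⟩
  · intro i hi hlt g heq
    set x := η ^ i with hx
    have hi1 : x ≠ 1 := hne1 i hi (by omega)
    have hiM1 : x ≠ -1 := hneM1 i hi (by omega)
    have hiinvM1 : x⁻¹ ≠ -1 := hinvM1 i hi (by omega)
    have hc : (1 - x) * (1 - x⁻¹) / (n : ℂ) ≠ 0 := by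
      refine div_ne_zero (mul_ne_zero ?_ ?_) hnC
      · exact sub_ne_zero.mpr (Ne.symm hi1)
      · exact sub_ne_zero.mpr fun h => hi1 (inv_eq_one.mp h.symm)
    refine rm_aux ((X - 1) * (X - C x) * (X - C x⁻¹)) g (C ((1 - x) * (1 - x⁻¹) / (n : ℂ)) * (X * (X ^ n - 1))) ?_ ?_ ?_
    · simp only [eval_mul, eval_sub, eval_X, eval_C, eval_one]
      refine mul_ne_zero (mul_ne_zero (by norm_num) ?_) ?_
      · exact sub_ne_zero.mpr fun h => hiM1 h.symm
      · exact sub_ne_zero.mpr fun h => hiinvM1 h.symm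
    · simp only [eval_mul, eval_sub, eval_X, eval_C, eval_one, eval_pow]
      rw [hodd.neg_one_pow]
      intro h
      rcases mul_eq_zero.mp h with h | h
      · exact hc h
      · norm_num at h
    · rw [heq]; ring
  · intro a b ha hab habn D heq
    set x := η ^ a with hx
    set y := η ^ b with hy
    have hxM1 : x ≠ -1 := hneM1 a ha (by omega)
    have hyM1 : y ≠ -1 := hneM1 b (by omega) (by omega)
    have hxinvM1 : x⁻¹ ≠ -1 := hinvM1 a ha (by omega)
    have hyinvM1 : y⁻¹ ≠ -1 := hinvM1 b (by omega) (by omega)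
    have hx0 : x ≠ 0 := pow_ne_zero _ hηne
    have hy0 : y ≠ 0 := pow_ne_zero _ hηne
    have hc : (x + x⁻¹ - y - y⁻¹) / (n : ℂ) ≠ 0 := by
      refine div_ne_zero ?_ hnC
      intro hcc
      have key : (x - y) * (x * y - 1) = (x + x⁻¹ - y - y⁻¹) * (x * y) := by
        field_simp
        ring
      rw [hcc, zero_mul] at key
      rcases mul_eq_zero.mp key with h | h
      · have hxy : x = y := sub_eq_zero.mp h
        have : η ^ (b - a) = 1 := by
          have hb : b = a + (b - a) := by omega
          have : η ^ b = η ^ a * η ^ (b - a) := by rw [← pow_add, ← hb]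
          rw [← hy, ← hx, ← hxy] at this
          field_simp at this
          exact this.symm
        exact hne1 (b - a) (by omega) (by omega) this
      · have : η ^ (a + b) = 1 := by
          rw [pow_add, ← hx, ← hy]
          exact sub_eq_zero.mp h
        exact hne1 (a + b) (by omega) (by omega) this
    refine rm_aux ((X - C x) * (X - C x⁻¹) * (X - C y) * (X - C y⁻¹)) D
      (C ((x + x⁻¹ - y - y⁻¹) / (n : ℂ)) * (X * (X - 1) * (X ^ n - 1))) ?_ ?_ ?_
    · simp only [eval_mul, eval_sub, eval_X, eval_C]
      refine mul_ne_zero (mul_ne_zero (mul_ne_zero ?_ ?_) ?_) ?_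
      · exact sub_ne_zero.mpr fun h => hxM1 h.symm
      · exact sub_ne_zero.mpr fun h => hxinvM1 h.symm
      · exact sub_ne_zero.mpr fun h => hyM1 h.symm
      · exact sub_ne_zero.mpr fun h => hyinvM1 h.symm
    · simp only [eval_mul, eval_sub, eval_X, eval_C, eval_one, eval_pow]
      rw [hodd.neg_one_pow]
      intro h
      rcases mul_eq_zero.mp h with h | h
      · exact hc h
      · norm_num at h
    · rw [heq]; ring
  · simp only [eval_pow, eval_X]
    rw [hodd.neg_one_pow]
    norm_num
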